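/- Let f : ℝ → ℝ be convex (ConvexOn ℝ Set.univ f). Then the function E : ℝ² → ℝ defined by E(a, b) = f(a − b) is submodular for the coordinatewise order on ℝ²: for all a₁, b₁, a₂, b₂ ∈ ℝ, f(min a₁ a₂ − min b₁ b₂) + f(max a₁ a₂ − max b₁ b₂) ≤ f(a₁ − b₁) + f(a₂ − b₂). -/

import Mathlib

lemma convex_pair_le (f : ℝ → ℝ) (hf : ConvexOn ℝ Set.univ f) {u v x y : ℝ}
    (huv : u ≤ v) (hx1 : u ≤ x) (hx2 : x ≤ v) (hxy : x + y = u + v) :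
    f x + f y ≤ f u + f v := by
  rcases eq_or_lt_of_le huv with h | h
  · subst h
    have hx : x = u := le_antisymm hx2 hx1
    have hy : y = u := by linarith
    simp [hx, hy]
  · set t : ℝ := (x - u) / (v - u) with ht
    have hvu : (0:ℝ) < v - u := by linarith
    have ht0 : 0 ≤ t := div_nonneg (by linarith) hvu.le
    have ht1 : t ≤ 1 := by
      rw [ht, div_le_one hvu]; linarith
    have hxe : x = (1 - t) * u + t * v := by
      rw [ht]; linear_combination -(div_mul_cancel₀ (x - u) hvu.ne')
    have hye : y = t * u + (1 - t) * v := by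
      have : y = u + v - x := by linarith
      rw [this, hxe]; ring
    have h1 := hf.2 (Set.mem_univ u) (Set.mem_univ v) (by linarith : (0:ℝ) ≤ 1 - t) ht0 (by ring)
    have h2 := hf.2 (Set.mem_univ u) (Set.mem_univ v) ht0 (by linarith : (0:ℝ) ≤ 1 - t) (by ring)
    simp only [smul_eq_mul] at h1 h2
    calc f x + f y ≤ ((1-t)*f u + t*f v) + (t*f u + (1-t)*f v) := by
          rw [hxe, hye]; exact add_le_add h1 h2
      _ = f u + f v := by ring

/-- If `f : ℝ → ℝ` is convex, then `(a, b) ↦ f (a - b)` is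
submodular for the coordinatewise order on `ℝ²`. -/
theorem convexDiff_submodular (f : ℝ → ℝ) (hf : ConvexOn ℝ Set.univ f) :
    ∀ a₁ b₁ a₂ b₂ : ℝ,
      f (min a₁ a₂ - min b₁ b₂) + f (max a₁ a₂ - max b₁ b₂) ≤ f (a₁ - b₁) + f (a₂ - b₂) := by
  intro a₁ b₁ a₂ b₂
  set u := a₁ - b₁
  set v := a₂ - b₂
  set x := min a₁ a₂ - min b₁ b₂
  set y := max a₁ a₂ - max b₁ b₂
  have hxy : x + y = min u v + max u v := by
    simp only [x, y, u, v, min_add_max]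
    have h1 : min a₁ a₂ + max a₁ a₂ = a₁ + a₂ := min_add_max _ _
    have h2 : min b₁ b₂ + max b₁ b₂ = b₁ + b₂ := min_add_max _ _
    linarith
  have hx1 : min u v ≤ x := by
    rcases le_total a₁ a₂ with ha | ha <;> rcases le_total b₁ b₂ with hb | hb <;>
      simp only [x, u, v, min_def, max_def] <;> split_ifs <;> linarith
  have hx2 : x ≤ max u v := by
    rcases le_total a₁ a₂ with ha | ha <;> rcases le_total b₁ b₂ with hb | hb <;>
      simp only [x, u, v, min_def, max_def] <;> split_ifs <;> linarith
  have key := convex_pair_le f hf (min_le_max) hx1 hx2 hxy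
  have : f (min u v) + f (max u v) = f u + f v := by
    rcases le_total u v with h | h <;> simp [min_eq_left, max_eq_right, min_eq_right, max_eq_left, h] <;> ring
  linarith
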